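/- Let H be a Hermitian matrix with Gibbs state ρ = e^{−βH}/Tr(e^{−βH}), and let Q(O,G,A,K) be the identifiability observable defined below. Then Q(O, G, A, H) = 0 for every Hermitian G and all matrices O, A. -/

import Mathlib

open Matrix Real Complex MeasureTheory

variable {m : ℕ}

/-- The Gibbs state `ρ_β(H) = e^{-βH}/Tr(e^{-βH})`. -/
noncomputable def gibbs (β : ℝ) (H : Matrix (Fin m) (Fin m) ℂ) : Matrix (Fin m) (Fin m) ℂ :=
  ((NormedSpace.exp ((-(β : ℂ)) • H)).trace.re)⁻¹ • NormedSpace.exp ((-(β : ℂ)) • H)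

/-- Heisenberg evolution `X_K(t) = e^{iKt} X e^{-iKt}`. -/
noncomputable def heis (K : Matrix (Fin m) (Fin m) ℂ) (t : ℝ)
    (X : Matrix (Fin m) (Fin m) ℂ) : Matrix (Fin m) (Fin m) ℂ :=
  NormedSpace.exp ((Complex.I * t) • K) * X * NormedSpace.exp ((-(Complex.I * t)) • K)

/-- The filter function `g(t) = −π^{3/2}/(2√2 (1 + cosh(πt)))`. -/
noncomputable def gFilter (t : ℝ) : ℝ :=
  -(π ^ ((3 : ℝ) / 2)) / (2 * Real.sqrt 2 * (1 + Real.cosh (π * t)))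

/-- The Gaussian weight `f(t) = e^{-σ²t²} √(σ√(2/π))`. -/
noncomputable def gaussWeight (σ t : ℝ) : ℝ :=
  Real.exp (-(σ ^ 2 * t ^ 2)) * Real.sqrt (σ * Real.sqrt (2 / π))

/-- The time-domain kernel `h₊` arising from the frequency-truncated imaginary-time
conjugation `∫_{|ω'|≤Ω} √ρ_K Â_K(ω') √(ρ_K⁻¹) dω' = (2π)^{-1/2}∫ A_K(t') h₊(t') dt'`. -/
noncomputable def hPlus (σ β Ω t : ℝ) : ℂ :=
  (gaussWeight σ t : ℂ) *
    ∫ ω' in (-Ω)..Ω,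
      Complex.exp (-(Complex.I * ((ω' : ℂ) - σ ^ 2 * β) * t)) *
        (Real.exp (-(β * ω') / 2 + σ ^ 2 * β ^ 2 / 4) : ℂ)

/-- The time-domain kernel `h₋` arising from
`∫_{|ω'|≤Ω} √(ρ_K⁻¹) Â_K(ω') √ρ_K dω' = (2π)^{-1/2}∫ A_K(t') h₋(t') dt'`. -/
noncomputable def hMinus (σ β Ω t : ℝ) : ℂ :=
  (gaussWeight σ t : ℂ) *
    ∫ ω' in (-Ω)..Ω,
      Complex.exp (-(Complex.I * ((ω' : ℂ) + σ ^ 2 * β) * t)) *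
        (Real.exp ((β * ω') / 2 + σ ^ 2 * β ^ 2 / 4) : ℂ)

/-- The identifiability observable
`Q(O,G,A,K) = (2π)^{-1/2} ∫∫ Tr[O†_G(t)(h₊(t') A_K(t'+t) ρ − h₋(t') ρ A_K(t'+t))]
g_β(t) dt' dt`, where `ρ` is the Gibbs state of the ground-truth Hamiltonian `H` and
`g_β(t) = (2/β) g(2t/β)`. -/
noncomputable def Qobs (σ Ω β : ℝ) (H G K O A : Matrix (Fin m) (Fin m) ℂ) : ℂ :=
  ((Real.sqrt (2 * π) : ℂ))⁻¹ *
    ∫ t : ℝ,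
      (∫ t' : ℝ,
        ((heis G t Oᴴ) *
            (hPlus σ β Ω t' • (heis K (t' + t) A * gibbs β H) -
              hMinus σ β Ω t' • (gibbs β H * heis K (t' + t) A))).trace) *
        (((2 / β) * gFilter (2 * t / β) : ℝ) : ℂ)

/-! ### Scalar analytic layer -/

lemma gaussWeight_nonneg {σ : ℝ} (hσ : 0 < σ) (t : ℝ) : 0 ≤ gaussWeight σ t := by
  unfold gaussWeight; positivity

lemma integrable_gaussWeight {σ : ℝ} (hσ : 0 < σ) : Integrable (gaussWeight σ) := by
  unfold gaussWeight
  simp_rw [neg_mul_eq_neg_mul (σ^2)]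
  exact (integrable_exp_neg_mul_sq (by positivity : (0:ℝ) < σ^2)).mul_const _

lemma gauss_fourier {σ : ℝ} (hσ : 0 < σ) (κ : ℂ) :
    ∫ t : ℝ, (gaussWeight σ t : ℂ) * Complex.exp (I * κ * t)
      = (Real.sqrt (σ * Real.sqrt (2 / π)) : ℂ) *
        ((↑π / (σ:ℂ)^2) ^ (1/2 : ℂ) * Complex.exp (-κ ^ 2 / (4 * (σ:ℂ)^2))) := by
  have hb : (0:ℝ) < ((σ:ℂ)^2).re := by norm_cast; positivity
  have h := fourierIntegral_gaussian (b := (σ:ℂ)^2) hb κ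
  rw [← h, ← integral_const_mul]
  congr 1
  ext t
  unfold gaussWeight
  push_cast
  ring

noncomputable def kerF (σ ν c u d : ℝ) (p : ℝ × ℝ) : ℂ :=
  Complex.exp (I*ν*p.1) * ((gaussWeight σ p.1 : ℂ) *
    (Complex.exp (-(I * ((p.2:ℂ) - c) * p.1)) * (Real.exp (u*p.2+d) : ℂ)))

lemma norm_kerF (σ ν c u d : ℝ) (p : ℝ × ℝ) :
    ‖kerF σ ν c u d p‖ = |gaussWeight σ p.1| * Real.exp (u*p.2+d) := by
  unfold kerF
  simp only [norm_mul, Complex.norm_exp, Complex.norm_real, Real.norm_eq_abs, Real.abs_exp]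
  have h1 : (I*(ν:ℂ)*(p.1:ℂ)).re = 0 := by simp
  have h2 : ((-(I * ((p.2:ℂ) - (c:ℂ)) * (p.1:ℂ)))).re = 0 := by simp
  rw [h1, h2]
  simp

lemma integrable_kerF {σ Ω : ℝ} (hσ : 0 < σ) (hΩ : 0 < Ω) (ν c u d : ℝ) :
    Integrable (kerF σ ν c u d) (volume.prod (volume.restrict (Set.Ioc (-Ω) Ω))) := by
  have hcont : Continuous (kerF σ ν c u d) := by
    unfold kerF gaussWeight; fun_prop
  have hmeasrw : (volume : Measure ℝ).prod (volume.restrict (Set.Ioc (-Ω) Ω))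
      = ((volume : Measure ℝ).prod volume).restrict (Set.univ ×ˢ Set.Ioc (-Ω) Ω) := by
    rw [← Measure.prod_restrict, Measure.restrict_univ]
  rw [hmeasrw]
  refine Integrable.mono' (g := fun p => gaussWeight σ p.1 * Real.exp (|u| * Ω + d)) ?_
    hcont.aestronglyMeasurable ?_
  · rw [← hmeasrw]
    exact (integrable_gaussWeight hσ).mul_prod (integrableOn_const measure_Ioc_lt_top.ne)
  · filter_upwards [ae_restrict_mem ((MeasurableSet.univ).prod measurableSet_Ioc)] with p hp
    obtain ⟨-, hp2⟩ := hp
    rw [norm_kerF, _root_.abs_of_nonneg (gaussWeight_nonneg hσ _)]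
    apply mul_le_mul_of_nonneg_left _ (gaussWeight_nonneg hσ _)
    apply Real.exp_le_exp.2
    have h1 : |p.2| ≤ Ω := by
      rw [abs_le]; exact ⟨le_of_lt hp2.1, hp2.2⟩
    nlinarith [abs_mul u p.2, le_abs_self (u*p.2), abs_nonneg u, abs_mul_abs_self u]

lemma hat_eval {σ Ω : ℝ} (hσ : 0 < σ) (hΩ : 0 < Ω) (ν c u d : ℝ) :
    ∫ t : ℝ, (∫ ω' in Set.Ioc (-Ω) Ω, kerF σ ν c u d (t, ω'))
      = ∫ ω' in Set.Ioc (-Ω) Ω, (Real.exp (u*ω'+d) : ℂ) *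
          ((Real.sqrt (σ * Real.sqrt (2 / π)) : ℂ) *
            ((↑π / (σ:ℂ)^2) ^ (1/2 : ℂ) *
              Complex.exp (-((ν:ℂ) - ω' + c) ^ 2 / (4 * (σ:ℂ)^2)))) := by
  rw [MeasureTheory.integral_integral_swap (f := fun t ω' => kerF σ ν c u d (t, ω'))
    (by exact integrable_kerF hσ hΩ ν c u d)]
  apply setIntegral_congr_fun measurableSet_Ioc
  intro ω hω
  have h2 : ∀ t : ℝ, kerF σ ν c u d (t, ω)
      = (Real.exp (u*ω+d) : ℂ) * ((gaussWeight σ t : ℂ) *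
          Complex.exp (I * ((ν:ℂ) - ω + c) * t)) := by
    intro t
    have harg : I*(ν:ℂ)*(t:ℂ) + (-(I * ((ω:ℂ) - c) * t)) = I * ((ν:ℂ) - ω + c) * t := by ring
    calc kerF σ ν c u d (t, ω)
        = (Real.exp (u*ω+d) : ℂ) * ((gaussWeight σ t : ℂ) *
            (Complex.exp (I*(ν:ℂ)*(t:ℂ)) * Complex.exp (-(I * ((ω:ℂ) - c) * t)))) := by
          unfold kerF; ring
      _ = _ := by rw [← Complex.exp_add, harg]
  simp_rw [h2]
  rw [integral_const_mul, gauss_fourier hσ]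

lemma cexp_mul_hPlus_eq {σ β Ω : ℝ} (hΩ : 0 < Ω) (ν : ℝ) (t : ℝ) :
    Complex.exp (I*ν*t) * hPlus σ β Ω t
      = ∫ ω' in Set.Ioc (-Ω) Ω, kerF σ ν (σ^2*β) (-(β/2)) (σ^2*β^2/4) (t, ω') := by
  unfold hPlus
  rw [intervalIntegral.integral_of_le (by linarith : -Ω ≤ Ω)]
  rw [← integral_const_mul, ← integral_const_mul]
  apply setIntegral_congr_fun measurableSet_Ioc
  intro ω hω
  unfold kerF
  push_cast
  ring_nf

lemma cexp_mul_hMinus_eq {σ β Ω : ℝ} (hΩ : 0 < Ω) (ν : ℝ) (t : ℝ) :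
    Complex.exp (I*ν*t) * hMinus σ β Ω t
      = ∫ ω' in Set.Ioc (-Ω) Ω, kerF σ ν (-(σ^2*β)) (β/2) (σ^2*β^2/4) (t, ω') := by
  unfold hMinus
  rw [intervalIntegral.integral_of_le (by linarith : -Ω ≤ Ω)]
  rw [← integral_const_mul, ← integral_const_mul]
  apply setIntegral_congr_fun measurableSet_Ioc
  intro ω hω
  unfold kerF
  push_cast
  ring_nf

lemma integrable_cexp_mul_hPlus {σ β Ω : ℝ} (hσ : 0 < σ) (hΩ : 0 < Ω) (ν : ℝ) :
    Integrable (fun t : ℝ => Complex.exp (I*ν*t) * hPlus σ β Ω t) := by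
  have := (integrable_kerF (Ω := Ω) hσ hΩ ν (σ^2*β) (-(β/2)) (σ^2*β^2/4)).integral_prod_left
  exact this.congr (by
    filter_upwards with t
    exact (cexp_mul_hPlus_eq hΩ ν t).symm)

lemma integrable_cexp_mul_hMinus {σ β Ω : ℝ} (hσ : 0 < σ) (hΩ : 0 < Ω) (ν : ℝ) :
    Integrable (fun t : ℝ => Complex.exp (I*ν*t) * hMinus σ β Ω t) := by
  have := (integrable_kerF (Ω := Ω) hσ hΩ ν (-(σ^2*β)) (β/2) (σ^2*β^2/4)).integral_prod_left
  exact this.congr (by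
    filter_upwards with t
    exact (cexp_mul_hMinus_eq hΩ ν t).symm)


lemma exp_aux {c₁ c₂ : ℂ} {r1 r2 r3 r4 : ℝ} {E1 E2 : ℂ}
    (h : (r1:ℂ) + r2 + E1 = (r3:ℂ) + r4 + E2) :
    (Real.exp r1 : ℂ) * ((Real.exp r2 : ℂ) * (c₁ * (c₂ * Complex.exp E1)))
      = (Real.exp r3 : ℂ) * ((Real.exp r4 : ℂ) * (c₁ * (c₂ * Complex.exp E2))) := by
  have e : ∀ (a b : ℝ) (E : ℂ), (Real.exp a : ℂ) * ((Real.exp b : ℂ) * (c₁ * (c₂ * Complex.exp E)))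
      = (c₁ * c₂) * Complex.exp ((a:ℂ) + b + E) := by
    intro a b E
    rw [Complex.exp_add, Complex.exp_add, ← Complex.ofReal_exp, ← Complex.ofReal_exp]
    ring
  rw [e, e, h]

/-- The key cancellation: the `t`-Fourier transform of
`e^{-βμp} h₊ − e^{-βμq} h₋` at frequency `ν = μq − μp` vanishes. -/
lemma key_cancel {σ β Ω : ℝ} (hσ : 0 < σ) (hΩ : 0 < Ω) (μp μq ν : ℝ)
    (hν : ν = μq - μp) :
    ∫ t : ℝ, Complex.exp (I*ν*t) *
        ((Real.exp (-(β*μp)) : ℂ) * hPlus σ β Ω t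
          - (Real.exp (-(β*μq)) : ℂ) * hMinus σ β Ω t) = 0 := by
  have hrw : ∀ t : ℝ, Complex.exp (I*ν*t) *
      ((Real.exp (-(β*μp)) : ℂ) * hPlus σ β Ω t - (Real.exp (-(β*μq)) : ℂ) * hMinus σ β Ω t)
      = (Real.exp (-(β*μp)) : ℂ) * (Complex.exp (I*ν*t) * hPlus σ β Ω t)
        - (Real.exp (-(β*μq)) : ℂ) * (Complex.exp (I*ν*t) * hMinus σ β Ω t) := by
    intro t; ring
  simp_rw [hrw]
  rw [integral_sub ((integrable_cexp_mul_hPlus hσ hΩ ν).const_mul _)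
    ((integrable_cexp_mul_hMinus hσ hΩ ν).const_mul _),
    integral_const_mul, integral_const_mul]
  simp_rw [cexp_mul_hPlus_eq hΩ ν, cexp_mul_hMinus_eq hΩ ν]
  rw [hat_eval hσ hΩ, hat_eval hσ hΩ, ← integral_const_mul, ← integral_const_mul]
  rw [sub_eq_zero]
  apply setIntegral_congr_fun measurableSet_Ioc
  intro ω hω
  have hσ' : (σ:ℂ) ≠ 0 := Complex.ofReal_ne_zero.2 hσ.ne'
  subst hν
  show (Real.exp (-(β*μp)) : ℂ) * ((Real.exp (-(β/2)*ω + σ^2*β^2/4) : ℂ) *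
      ((Real.sqrt (σ * Real.sqrt (2 / π)) : ℂ) *
        ((↑π / (σ:ℂ)^2) ^ (1/2 : ℂ) *
          Complex.exp (-(((μq - μp : ℝ):ℂ) - ω + ((σ^2*β : ℝ):ℂ)) ^ 2 / (4 * (σ:ℂ)^2)))))
    = (Real.exp (-(β*μq)) : ℂ) * ((Real.exp ((β/2)*ω + σ^2*β^2/4) : ℂ) *
      ((Real.sqrt (σ * Real.sqrt (2 / π)) : ℂ) *
        ((↑π / (σ:ℂ)^2) ^ (1/2 : ℂ) *
          Complex.exp (-(((μq - μp : ℝ):ℂ) - ω + ((-(σ^2*β) : ℝ):ℂ)) ^ 2 / (4 * (σ:ℂ)^2)))))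
  apply exp_aux
  push_cast
  field_simp
  ring


/-! ### Matrix layer -/

lemma exp_smul_eigen {H : Matrix (Fin m) (Fin m) ℂ} (hH : H.IsHermitian) (c : ℂ) :
    NormedSpace.exp (c • H)
      = (hH.eigenvectorUnitary : Matrix (Fin m) (Fin m) ℂ) *
          diagonal (fun j => Complex.exp (c * hH.eigenvalues j)) *
          star (hH.eigenvectorUnitary : Matrix (Fin m) (Fin m) ℂ) := by
  set V : Matrix (Fin m) (Fin m) ℂ := (hH.eigenvectorUnitary : Matrix (Fin m) (Fin m) ℂ) with hV
  have hU1 : V * star V = 1 := mem_unitaryGroup_iff.mp hH.eigenvectorUnitary.2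
  have hU2 : star V * V = 1 := mem_unitaryGroup_iff'.mp hH.eigenvectorUnitary.2
  let u : (Matrix (Fin m) (Fin m) ℂ)ˣ := ⟨V, star V, hU1, hU2⟩
  have hsp : c • H = (u : Matrix (Fin m) (Fin m) ℂ) * (diagonal fun j => c * (hH.eigenvalues j : ℂ)) * ((u⁻¹ : (Matrix (Fin m) (Fin m) ℂ)ˣ) : Matrix (Fin m) (Fin m) ℂ) := by
    show c • H = V * (diagonal fun j => c * (hH.eigenvalues j : ℂ)) * star V
    conv_lhs => rw [hH.spectral_theorem, Unitary.conjStarAlgAut_apply]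
    rw [← Matrix.smul_mul, ← Matrix.mul_smul]
    congr 1
    rw [← diagonal_smul, hV]
    rfl
  rw [hsp, Matrix.exp_units_conj]
  show V * NormedSpace.exp (diagonal fun j => c * (hH.eigenvalues j : ℂ)) * star V = _
  rw [Matrix.exp_diagonal]
  congr 2
  rw [Pi.exp_def]
  funext j
  rw [← Complex.exp_eq_exp_ℂ]

lemma heis_eigen {H : Matrix (Fin m) (Fin m) ℂ} (hH : H.IsHermitian) (s : ℝ)
    (A : Matrix (Fin m) (Fin m) ℂ) :
    heis H s A
      = (hH.eigenvectorUnitary : Matrix (Fin m) (Fin m) ℂ) *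
          (diagonal (fun j => Complex.exp ((Complex.I * s) * hH.eigenvalues j)) *
            (star (hH.eigenvectorUnitary : Matrix (Fin m) (Fin m) ℂ) * A *
              (hH.eigenvectorUnitary : Matrix (Fin m) (Fin m) ℂ)) *
            diagonal (fun j => Complex.exp ((-(Complex.I * s)) * hH.eigenvalues j))) *
          star (hH.eigenvectorUnitary : Matrix (Fin m) (Fin m) ℂ) := by
  unfold heis
  rw [exp_smul_eigen hH, exp_smul_eigen hH]
  simp only [Matrix.mul_assoc]

/-- trace of `C * (diagonal-sandwich)` as a double sum. -/
lemma trace_sandwich (C B : Matrix (Fin m) (Fin m) ℂ) (d e f : Fin m → ℂ) :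
    (C * (diagonal d * B * diagonal e * diagonal f)).trace
      = ∑ p, ∑ q, C p q * (d q * B q p * e p * f p) := by
  have hM : ∀ i j, (diagonal d * B * diagonal e * diagonal f) i j
      = d i * B i j * e j * f j := by
    intro i j
    rw [Matrix.mul_diagonal, Matrix.mul_diagonal, Matrix.diagonal_mul]
  simp only [Matrix.trace, Matrix.diag, Matrix.mul_apply, hM]


lemma trace_term {H : Matrix (Fin m) (Fin m) ℂ} (hH : H.IsHermitian)
    (W A : Matrix (Fin m) (Fin m) ℂ) (σ β Ω t t' : ℝ) :
    (W * (hPlus σ β Ω t' • (heis H (t' + t) A * NormedSpace.exp ((-(β:ℂ)) • H)) -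
        hMinus σ β Ω t' • (NormedSpace.exp ((-(β:ℂ)) • H) * heis H (t' + t) A))).trace
      = ∑ p, ∑ q,
          (((star (hH.eigenvectorUnitary : Matrix (Fin m) (Fin m) ℂ) * W *
              (hH.eigenvectorUnitary : Matrix (Fin m) (Fin m) ℂ)) p q *
            (star (hH.eigenvectorUnitary : Matrix (Fin m) (Fin m) ℂ) * A *
              (hH.eigenvectorUnitary : Matrix (Fin m) (Fin m) ℂ)) q p *
            Complex.exp (Complex.I * ((hH.eigenvalues q - hH.eigenvalues p : ℝ) : ℂ) * t)) *
          (Complex.exp (Complex.I * ((hH.eigenvalues q - hH.eigenvalues p : ℝ) : ℂ) * t') *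
            ((Real.exp (-(β * hH.eigenvalues p)) : ℂ) * hPlus σ β Ω t'
              - (Real.exp (-(β * hH.eigenvalues q)) : ℂ) * hMinus σ β Ω t'))) := by
  set V : Matrix (Fin m) (Fin m) ℂ := (hH.eigenvectorUnitary : Matrix (Fin m) (Fin m) ℂ) with hV
  have hU2 : star V * V = 1 := mem_unitaryGroup_iff'.mp hH.eigenvectorUnitary.2
  set lam : Fin m → ℝ := hH.eigenvalues with hlam
  set B : Matrix (Fin m) (Fin m) ℂ := star V * A * V with hB
  set C : Matrix (Fin m) (Fin m) ℂ := star V * W * V with hC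
  set s : ℝ := t' + t with hs
  set d₁ : Fin m → ℂ := fun j => Complex.exp ((Complex.I * s) * lam j) with hd₁
  set e₂ : Fin m → ℂ := fun j => Complex.exp ((-(Complex.I * s)) * lam j) with he₂
  set eβ : Fin m → ℂ := fun j => Complex.exp ((-(β:ℂ)) * lam j) with heβ
  have hP : NormedSpace.exp ((-(β:ℂ)) • H) = V * diagonal eβ * star V :=
    exp_smul_eigen hH _
  have cancel : ∀ X : Matrix (Fin m) (Fin m) ℂ, star V * (V * X) = X := by
    intro X
    rw [← Matrix.mul_assoc, hU2, Matrix.one_mul]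
  have hX : heis H s A * NormedSpace.exp ((-(β:ℂ)) • H)
      = V * (diagonal d₁ * B * diagonal e₂ * diagonal eβ) * star V := by
    rw [heis_eigen hH, hP, ← hV, ← hB, ← hd₁, ← he₂]
    simp only [Matrix.mul_assoc, cancel]
  have hY : NormedSpace.exp ((-(β:ℂ)) • H) * heis H s A
      = V * (diagonal eβ * (diagonal d₁ * B) * diagonal e₂ * diagonal (fun _ => (1:ℂ))) * star V := by
    rw [heis_eigen hH, hP, ← hV, ← hB, ← hd₁, ← he₂]
    simp only [Matrix.diagonal_one, Matrix.one_mul, Matrix.mul_one, Matrix.mul_assoc, cancel]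
  have htr : ∀ M : Matrix (Fin m) (Fin m) ℂ, (W * (V * M * star V)).trace = (C * M).trace := by
    intro M
    rw [hC]
    rw [show W * (V * M * star V) = (W * V * M) * star V by simp only [Matrix.mul_assoc],
      Matrix.trace_mul_comm]
    simp only [Matrix.mul_assoc]
  rw [hX, hY, Matrix.mul_sub, Matrix.mul_smul, Matrix.mul_smul, Matrix.trace_sub,
    Matrix.trace_smul, Matrix.trace_smul, htr, htr, smul_eq_mul, smul_eq_mul]
  have hdd : diagonal eβ * (diagonal d₁ * B) = diagonal (fun j => eβ j * d₁ j) * B := by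
    rw [← Matrix.mul_assoc, Matrix.diagonal_mul_diagonal]
  rw [hdd]
  rw [trace_sandwich, trace_sandwich, Finset.mul_sum, Finset.mul_sum, ← Finset.sum_sub_distrib]
  apply Finset.sum_congr rfl; intro p _
  rw [Finset.mul_sum, Finset.mul_sum, ← Finset.sum_sub_distrib]
  apply Finset.sum_congr rfl; intro q _
  have e1 : d₁ q * e₂ p
      = Complex.exp (Complex.I * ((lam q - lam p : ℝ) : ℂ) * t')
        * Complex.exp (Complex.I * ((lam q - lam p : ℝ) : ℂ) * t) := by
    have h1 : (Complex.I*(s:ℂ)) * (lam q:ℂ) + (-(Complex.I*(s:ℂ))) * (lam p:ℂ)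
        = Complex.I*((lam q - lam p : ℝ):ℂ)*(t':ℂ) + Complex.I*((lam q - lam p : ℝ):ℂ)*(t:ℂ) := by
      push_cast [hs]
      ring
    simp only [hd₁, he₂]
    rw [← Complex.exp_add, h1, Complex.exp_add]
  have e2 : eβ p = (Real.exp (-(β * lam p)) : ℂ) := by
    have h1 : (-(β:ℂ)) * (lam p : ℂ) = ((-(β * lam p) : ℝ) : ℂ) := by push_cast; ring
    simp only [heβ]
    rw [h1, Complex.ofReal_exp]
  have e3 : eβ q = (Real.exp (-(β * lam q)) : ℂ) := by
    have h1 : (-(β:ℂ)) * (lam q : ℂ) = ((-(β * lam q) : ℝ) : ℂ) := by push_cast; ring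
    simp only [heβ]
    rw [h1, Complex.ofReal_exp]
  simp only [mul_one]
  linear_combination (hPlus σ β Ω t' * C p q * B q p * eβ p
      - hMinus σ β Ω t' * C p q * B q p * eβ q) * e1
    + (hPlus σ β Ω t' * C p q * B q p *
        (Complex.exp (Complex.I * ((lam q - lam p : ℝ) : ℂ) * t')
          * Complex.exp (Complex.I * ((lam q - lam p : ℝ) : ℂ) * t))) * e2
    - (hMinus σ β Ω t' * C p q * B q p *
        (Complex.exp (Complex.I * ((lam q - lam p : ℝ) : ℂ) * t')
          * Complex.exp (Complex.I * ((lam q - lam p : ℝ) : ℂ) * t))) * e3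


lemma integrable_term {σ β Ω : ℝ} (hσ : 0 < σ) (hΩ : 0 < Ω) (K a b : ℂ) (ν : ℝ) :
    Integrable (fun t' : ℝ =>
      K * (Complex.exp (I*ν*t') * (a * hPlus σ β Ω t' - b * hMinus σ β Ω t'))) := by
  have h := ((integrable_cexp_mul_hPlus (β := β) hσ hΩ ν).const_mul a).sub
    ((integrable_cexp_mul_hMinus (β := β) hσ hΩ ν).const_mul b)
  exact (h.const_mul K).congr (Filter.Eventually.of_forall fun t => by simp only [Pi.sub_apply]; ring)

/-- **Existence of a global perfect guess:** the identifiability observable vanishes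
identically when the test Hamiltonian equals the ground truth: `Q(O, G, A, H) = 0`
for every Hermitian `G` and all matrices `O, A`. -/
theorem Qobs_eq_zero_of_eq (H G O A : Matrix (Fin m) (Fin m) ℂ)
    (hH : H.IsHermitian) (hG : G.IsHermitian)
    (σ Ω β : ℝ) (hσ : 0 < σ) (hΩ : 0 < Ω) (hβ : 0 < β) :
    Qobs σ Ω β H G H O A = 0 := by
  have main : ∀ t : ℝ,
      (∫ t' : ℝ,
        ((heis G t Oᴴ) *
            (hPlus σ β Ω t' • (heis H (t' + t) A * gibbs β H) -
              hMinus σ β Ω t' • (gibbs β H * heis H (t' + t) A))).trace) = 0 := by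
    intro t
    set W : Matrix (Fin m) (Fin m) ℂ := heis G t Oᴴ with hW
    set z : ℝ := ((NormedSpace.exp ((-(β : ℂ)) • H)).trace.re)⁻¹ with hz
    have hgibbs : gibbs β H = z • NormedSpace.exp ((-(β : ℂ)) • H) := rfl
    have hsplit : ∀ t' : ℝ,
        (W * (hPlus σ β Ω t' • (heis H (t' + t) A * gibbs β H) -
          hMinus σ β Ω t' • (gibbs β H * heis H (t' + t) A))).trace
        = (z:ℂ) * (W * (hPlus σ β Ω t' • (heis H (t' + t) A * NormedSpace.exp ((-(β : ℂ)) • H)) -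
            hMinus σ β Ω t' • (NormedSpace.exp ((-(β : ℂ)) • H) * heis H (t' + t) A))).trace := by
      intro t'
      rw [hgibbs, Matrix.mul_smul, Matrix.smul_mul,
        smul_comm (hPlus σ β Ω t') z, smul_comm (hMinus σ β Ω t') z,
        ← smul_sub, Matrix.mul_smul, Matrix.trace_smul]
      rw [Complex.real_smul]
    simp_rw [hsplit]
    rw [MeasureTheory.integral_const_mul]
    have hzero : (∫ t' : ℝ,
        (W * (hPlus σ β Ω t' • (heis H (t' + t) A * NormedSpace.exp ((-(β : ℂ)) • H)) -
          hMinus σ β Ω t' • (NormedSpace.exp ((-(β : ℂ)) • H) * heis H (t' + t) A))).trace) = 0 := by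
      simp_rw [trace_term hH W A σ β Ω t]
      rw [MeasureTheory.integral_finset_sum _ (fun p _ => by
        apply integrable_finset_sum
        intro q _
        exact integrable_term hσ hΩ _ _ _ _)]
      apply Finset.sum_eq_zero
      intro p _
      rw [MeasureTheory.integral_finset_sum _ (fun q _ => integrable_term hσ hΩ _ _ _ _)]
      apply Finset.sum_eq_zero
      intro q _
      rw [MeasureTheory.integral_const_mul,
        key_cancel hσ hΩ (hH.eigenvalues p) (hH.eigenvalues q) _ rfl, mul_zero]
    rw [hzero, mul_zero]
  unfold Qobs
  rw [show (∫ t : ℝ,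
      (∫ t' : ℝ,
        ((heis G t Oᴴ) *
            (hPlus σ β Ω t' • (heis H (t' + t) A * gibbs β H) -
              hMinus σ β Ω t' • (gibbs β H * heis H (t' + t) A))).trace) *
        (((2 / β) * gFilter (2 * t / β) : ℝ) : ℂ)) = ∫ t : ℝ, (0:ℂ) from
    integral_congr_ae (Filter.Eventually.of_forall fun t => by simp only [main t, zero_mul]),
    integral_zero, mul_zero]
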